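/- Fix k > 0 and L > 0. Then the function λ ↦ (1/(2k))·log( (k + λ)·(cosh(L·√(k² − λ²)/4)² − λ²/k²) / ((k − λ)·(cosh(L·√(k² − λ²)/4) + 1)²) ) tends to (1/(2k))·log(1 + L²·k²/16) as λ tends to k from the left within (0, k) (i.e. the limit along the filter 𝓝[Set.Ioo 0 k] k is 𝓝 ((1/(2k))·log(1 + L²·k²/16))). -/

import Mathlib

open Topology

lemma sinh_div_self' : Filter.Tendsto (fun u : ℝ => Real.sinh u / u) (𝓝[≠] 0) (𝓝 1) := by
  have h := (Real.hasDerivAt_sinh 0)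
  rw [hasDerivAt_iff_tendsto_slope] at h
  simp only [Real.cosh_zero] at h
  refine h.congr (fun u => ?_)
  simp [slope_def_field]

lemma cosh_sub_one_div_sq' :
    Filter.Tendsto (fun u : ℝ => (Real.cosh u - 1) / u ^ 2) (𝓝[≠] 0) (𝓝 (1/2)) := by
  have hmap : Filter.Tendsto (fun u : ℝ => u / 2) (𝓝[≠] 0) (𝓝[≠] 0) := by
    apply Filter.Tendsto.inf
    · have : Filter.Tendsto (fun u : ℝ => u / 2) (𝓝 0) (𝓝 (0/2)) :=
        ((continuous_id : Continuous (id : ℝ → ℝ)).div_const 2).tendsto 0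
      simpa using this
    · exact Filter.tendsto_principal_principal.2 (fun u hu => by
        simp only [Set.mem_compl_iff, Set.mem_singleton_iff] at *
        intro h; exact hu (by linarith))
  have h1 : Filter.Tendsto (fun u : ℝ => (Real.sinh (u/2) / (u/2)) ^ 2 / 2) (𝓝[≠] 0) (𝓝 (1/2)) := by
    have := ((sinh_div_self'.comp hmap).pow 2).div_const 2
    simpa using this
  refine h1.congr' ?_
  filter_upwards [self_mem_nhdsWithin] with u hu
  have hu' : u ≠ 0 := hu
  have hc : Real.cosh u - 1 = 2 * Real.sinh (u/2) ^ 2 := by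
    have h1 := Real.cosh_two_mul (u/2)
    have h2 : Real.cosh (u/2) ^ 2 = Real.sinh (u/2) ^ 2 + 1 := Real.cosh_sq (u/2)
    rw [show 2 * (u/2) = u by ring] at h1
    rw [h1, h2]; ring
  field_simp [hc]
  linarith [hc]


/-- **Phase transition `λ → k⁻` in the hyperbolic inradius bound.**
For fixed `k > 0` and `L > 0`, the right-hand side of the bound for `0 < λ < k` tends to the
right-hand side of the bound for `λ = k` as `λ → k` from the left within `(0, k)`. -/
theorem tendsto_hyperbolic_bound_lambda_to_k_from_left
    (k L : ℝ) (hk : 0 < k) (hL : 0 < L) :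
    Filter.Tendsto
      (fun lam : ℝ => (1 / (2 * k)) *
        Real.log ((k + lam) * (Real.cosh (L * Real.sqrt (k ^ 2 - lam ^ 2) / 4) ^ 2
            - lam ^ 2 / k ^ 2) /
          ((k - lam) * (Real.cosh (L * Real.sqrt (k ^ 2 - lam ^ 2) / 4) + 1) ^ 2)))
      (𝓝[Set.Ioo 0 k] k)
      (𝓝 ((1 / (2 * k)) * Real.log (1 + L ^ 2 * k ^ 2 / 16))) := by
  set t : ℝ → ℝ := fun lam => L * Real.sqrt (k ^ 2 - lam ^ 2) / 4 with ht_def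
  -- t tends to 0 within 𝓝
  have ht0 : Filter.Tendsto t (𝓝[Set.Ioo 0 k] k) (𝓝 0) := by
    have hc : Continuous t := by
      continuity
    have := (hc.tendsto k).mono_left (nhdsWithin_le_nhds (s := Set.Ioo 0 k))
    simpa [ht_def, show k ^ 2 - k ^ 2 = 0 by ring] using this
  -- t ≠ 0 on Ioo 0 k
  have htpos : ∀ lam ∈ Set.Ioo 0 k, 0 < t lam := by
    intro lam hlam
    have h1 : 0 < k ^ 2 - lam ^ 2 := by nlinarith [hlam.1, hlam.2]
    have := Real.sqrt_pos.mpr h1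
    simp only [ht_def]
    positivity
  have ht : Filter.Tendsto t (𝓝[Set.Ioo 0 k] k) (𝓝[≠] 0) := by
    rw [tendsto_nhdsWithin_iff]
    refine ⟨ht0, ?_⟩
    filter_upwards [self_mem_nhdsWithin] with lam hlam
    exact (htpos lam hlam).ne'
  have hlam : Filter.Tendsto (fun lam : ℝ => lam) (𝓝[Set.Ioo 0 k] k) (𝓝 k) :=
    Filter.tendsto_id.mono_left nhdsWithin_le_nhds
  have hcosh : Filter.Tendsto (fun lam => Real.cosh (t lam)) (𝓝[Set.Ioo 0 k] k) (𝓝 1) := by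
    have := (Real.continuous_cosh.tendsto 0).comp ht0
    exact (by simpa using this : Filter.Tendsto (Real.cosh ∘ t) _ (𝓝 1))
  -- factor A
  have hA : Filter.Tendsto
      (fun lam => (k + lam) * (Real.cosh (t lam) + lam / k) / (Real.cosh (t lam) + 1) ^ 2)
      (𝓝[Set.Ioo 0 k] k) (𝓝 ((k + k) * (1 + k / k) / (1 + 1) ^ 2)) := by
    exact (((tendsto_const_nhds.add hlam).mul (hcosh.add (hlam.div_const k))).div
      ((hcosh.add tendsto_const_nhds).pow 2) (by norm_num))
  -- factor B
  have hB : Filter.Tendsto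
      (fun lam => ((Real.cosh (t lam) - 1) / (t lam) ^ 2) * (L ^ 2 * (k + lam) / 16) + 1 / k)
      (𝓝[Set.Ioo 0 k] k) (𝓝 ((1/2) * (L ^ 2 * (k + k) / 16) + 1 / k)) := by
    exact ((cosh_sub_one_div_sq'.comp ht).mul
      (((tendsto_const_nhds.add hlam).const_mul _).div_const 16)).add tendsto_const_nhds
  have hf : Filter.Tendsto
      (fun lam => ((k + lam) * (Real.cosh (t lam) + lam / k) / (Real.cosh (t lam) + 1) ^ 2) *
        (((Real.cosh (t lam) - 1) / (t lam) ^ 2) * (L ^ 2 * (k + lam) / 16) + 1 / k))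
      (𝓝[Set.Ioo 0 k] k) (𝓝 (1 + L ^ 2 * k ^ 2 / 16)) := by
    have := hA.mul hB
    convert this using 2
    field_simp
    ring
  -- eventual equality with the original inner function
  have heq : ∀ᶠ lam in 𝓝[Set.Ioo 0 k] k,
      (k + lam) * (Real.cosh (t lam) ^ 2 - lam ^ 2 / k ^ 2) /
        ((k - lam) * (Real.cosh (t lam) + 1) ^ 2)
      = ((k + lam) * (Real.cosh (t lam) + lam / k) / (Real.cosh (t lam) + 1) ^ 2) *
        (((Real.cosh (t lam) - 1) / (t lam) ^ 2) * (L ^ 2 * (k + lam) / 16) + 1 / k) := by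
    filter_upwards [self_mem_nhdsWithin] with lam hlam
    have h1 : 0 < k ^ 2 - lam ^ 2 := by nlinarith [hlam.1, hlam.2]
    have ht2 : (t lam) ^ 2 = L ^ 2 * ((k - lam) * (k + lam)) / 16 := by
      simp only [ht_def]
      rw [div_pow, mul_pow, Real.sq_sqrt h1.le]
      ring_nf
    have htne : t lam ≠ 0 := (htpos lam hlam).ne'
    have hkl : k - lam ≠ 0 := by have := hlam.2; intro h; linarith
    have hkl2 : (0:ℝ) < k + lam := by linarith [hlam.1]
    have hcp : 0 < Real.cosh (t lam) + 1 := by positivity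
    have key : (Real.cosh (t lam) - 1) / (t lam) ^ 2 * (L ^ 2 * (k + lam) / 16)
        = (Real.cosh (t lam) - 1) / (k - lam) := by
      rw [ht2]; field_simp
    rw [key]
    field_simp
    ring
  -- inner tendsto for the original expression
  have hinner : Filter.Tendsto
      (fun lam => (k + lam) * (Real.cosh (t lam) ^ 2 - lam ^ 2 / k ^ 2) /
        ((k - lam) * (Real.cosh (t lam) + 1) ^ 2))
      (𝓝[Set.Ioo 0 k] k) (𝓝 (1 + L ^ 2 * k ^ 2 / 16)) :=
    hf.congr' (heq.mono fun _ h => h.symm)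
  have hp : (0:ℝ) < 1 + L ^ 2 * k ^ 2 / 16 := by positivity
  have hlog : Filter.Tendsto (fun x : ℝ => (1 / (2 * k)) * Real.log x)
      (𝓝 (1 + L ^ 2 * k ^ 2 / 16)) (𝓝 ((1 / (2 * k)) * Real.log (1 + L ^ 2 * k ^ 2 / 16))) :=
    (continuousAt_const.mul (Real.continuousAt_log hp.ne')).tendsto
  exact hlog.comp hinner
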